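/- Brown's polar solution ψ_{−1} satisfies, after the change of variables # (substituting x_j ↦ x_1 + ... + x_j), the identity ψ_{−1}^#(x_1,...,x_d) = (1/(x_1+...+x_d)) · log(paj)(x_1,...,x_d) for all d ≥ 1, where log is with respect to the mould product × and paj^m(x_1,...,x_m) = 1/(x_1(x_1+x_2)···(x_1+...+x_m)). -/

import Mathlib

open scoped BigOperators

/-- All shuffle interleavings of two lists, preserving the relative order of each. -/
def shuffles {α : Type*} : List α → List α → List (List α)
  | [], ys => [ys]
  | xs, [] => [xs]
  | x :: xs, y :: ys =>
      ((shuffles xs (y :: ys)).map (x :: ·)) ++ ((shuffles (x :: xs) ys).map (y :: ·))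
termination_by xs ys => xs.length + ys.length
decreasing_by all_goals (simp; try omega)

variable {K : Type*} [Field K]

/-- The shuffle sum of a mould `M` over all interleavings of `a` and `b`. -/
def shSum (M : List K → K) (a b : List K) : K := ((shuffles a b).map M).sum

/-- The mould (concatenation-deconcatenation) product. -/
def mmul (M N : List K → K) (w : List K) : K :=
  ∑ k ∈ Finset.range (w.length + 1), M (w.take k) * N (w.drop k)

/-- The unit mould: `1` in length `0` and `0` otherwise. -/
def one : List K → K := fun l => match l with | [] => 1 | _ => 0

/-- The mould `paj`: `paj^m(x_1,…,x_m) = 1/(x_1(x_1+x_2)⋯(x_1+⋯+x_m))`, `paj^0 = 1`. -/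
noncomputable def paj {K : Type*} [Field K] (l : List K) : K :=
  (∏ k ∈ Finset.range l.length, (l.take (k + 1)).sum)⁻¹

/-- Iterated ×-powers of a mould. -/
def mpow (M : List K → K) : ℕ → List K → K
  | 0 => one
  | n + 1 => mmul (mpow M n) M

/-- Strictly increasing chains `0 = i_0 < i_1 < ⋯ < i_h = d`. -/
def chains (h d : ℕ) : Finset (Fin (h + 1) → Fin (d + 1)) :=
  Finset.univ.filter fun f =>
    (∀ i j : Fin (h + 1), i < j → f i < f j) ∧ f 0 = 0 ∧ f (Fin.last h) = Fin.last d

/-- Brown's polar solution `ψ_{−1}^{(d)}(y_1,…,y_d)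
  = (1/y_d) Σ_{h=1}^d ((−1)^{h+1}/h) Σ_{0=i_0<⋯<i_h=d} ∏_{s<h} 1/∏_{i_s<j≤i_{s+1}}(y_j − y_{i_s})`,
with `y_0 = 0`, as a function of `y : ℕ → K`. -/
noncomputable def psiNegOne {K : Type*} [Field K] (d : ℕ) (y : ℕ → K) : K :=
  (y d)⁻¹ * ∑ h ∈ Finset.Icc 1 d, ((-1 : K) ^ (h + 1) / (h : K)) *
    ∑ f ∈ chains h d, ∏ s : Fin h,
      (∏ j ∈ Finset.Ioc (f s.castSucc : ℕ) (f s.succ : ℕ),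
        (y j - y (f s.castSucc : ℕ)))⁻¹

lemma mem_chains {h d : ℕ} {f : Fin (h+1) → Fin (d+1)} :
    f ∈ chains h d ↔
      (∀ i j : Fin (h + 1), i < j → f i < f j) ∧ f 0 = 0 ∧ f (Fin.last h) = Fin.last d := by
  simp [chains]

lemma chain_mono {h d : ℕ} {f : Fin (h+1) → Fin (d+1)}
    (hm : ∀ i j : Fin (h + 1), i < j → f i < f j) {i j : Fin (h+1)} (hij : i ≤ j) :
    f i ≤ f j := by
  rcases eq_or_lt_of_le hij with rfl | hlt
  · exact le_rfl
  · exact (hm i j hlt).le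

/-- extend a chain on `[0,k]` by the endpoint `d` -/

def extChain (d : ℕ) {h k : ℕ} (g : Fin (h+1) → Fin (k+1)) : Fin (h+2) → Fin (d+1) :=
  fun i => if hi : (i : ℕ) < h + 1 then ⟨min (g ⟨i, hi⟩) d, by omega⟩ else Fin.last d

/-- restrict a chain to its first h+1 entries -/

def resChain (k : ℕ) {h d : ℕ} (f : Fin (h+2) → Fin (d+1)) : Fin (h+1) → Fin (k+1) :=
  fun i => ⟨min (f i.castSucc) k, by omega⟩

lemma extChain_val {d h k : ℕ} (hk : k ≤ d) (g : Fin (h+1) → Fin (k+1))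
    (i : Fin (h+2)) (hi : (i : ℕ) < h + 1) :
    (extChain d g i : ℕ) = g ⟨i, hi⟩ := by
  simp only [extChain, dif_pos hi, Fin.val_mk]
  have := Fin.is_le (g ⟨i, hi⟩)
  omega

lemma extChain_val_last {d h k : ℕ} (g : Fin (h+1) → Fin (k+1)) (i : Fin (h+2))
    (hi : ¬ (i : ℕ) < h + 1) : extChain d g i = Fin.last d := by
  simp only [extChain, dif_neg hi]

lemma key (T : ℕ → ℕ → K) (h d : ℕ) :
    ∑ f ∈ chains (h+1) d, ∏ s : Fin (h+1), T (f s.castSucc) (f s.succ)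
      = ∑ k ∈ Finset.range d,
          (∑ g ∈ chains h k, ∏ s : Fin h, T (g s.castSucc) (g s.succ)) * T k d := by
  have hmap : ∀ f ∈ chains (h+1) d, ((f (Fin.last h).castSucc : ℕ)) ∈ Finset.range d := by
    intro f hf
    rw [mem_chains] at hf
    obtain ⟨hm, h0, hl⟩ := hf
    rw [Finset.mem_range]
    have := hm (Fin.last h).castSucc (Fin.last (h+1)) (Fin.castSucc_lt_last _)
    rw [hl] at this
    rw [Fin.lt_iff_val_lt_val, Fin.val_last] at this
    exact this
  rw [← Finset.sum_fiberwise_of_maps_to hmap]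
  refine Finset.sum_congr rfl fun k hk => ?_
  rw [Finset.mem_range] at hk
  rw [Finset.sum_mul]
  refine Finset.sum_nbij' (i := resChain k) (j := extChain d)
    ?_ ?_ ?_ ?_ ?_
  · intro f hf
    rw [Finset.mem_filter, mem_chains] at hf
    obtain ⟨⟨hm, h0, hl⟩, hfk⟩ := hf
    have hle : ∀ i : Fin (h+1), (f i.castSucc : ℕ) ≤ k := by
      intro i
      have : f i.castSucc ≤ f (Fin.last h).castSucc :=
        chain_mono hm (by
          rw [Fin.le_iff_val_le_val]; simpa using Fin.is_le i)
      rw [Fin.le_iff_val_le_val] at this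
      omega
    rw [mem_chains]
    refine ⟨?_, ?_, ?_⟩
    · intro i j hij
      have := hm i.castSucc j.castSucc (by simpa using hij)
      rw [Fin.lt_iff_val_lt_val] at this ⊢
      simp only [resChain, Fin.val_mk]
      have := hle i
      have := hle j
      omega
    · apply Fin.ext
      simp only [resChain, Fin.val_mk, Fin.val_zero]
      have h00 : ((0 : Fin (h+1)).castSucc) = (0 : Fin (h+2)) := rfl
      rw [h00, h0]
      simp
    · apply Fin.ext
      simp only [resChain, Fin.val_mk, Fin.val_last]
      omega
  · intro g hg
    rw [mem_chains] at hg
    obtain ⟨hm, h0, hl⟩ := hg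
    rw [Finset.mem_filter, mem_chains]
    have hlastval : (extChain d g (Fin.last h).castSucc : ℕ) = k := by
      rw [extChain_val hk.le g _ (by simp)]
      have : (⟨((Fin.last h).castSucc : ℕ), by simp⟩ : Fin (h+1)) = Fin.last h :=
        Fin.ext (by simp)
      rw [this, hl]
      simp
    refine ⟨⟨?_, ?_, ?_⟩, hlastval⟩
    · intro i j hij
      rw [Fin.lt_iff_val_lt_val] at hij ⊢
      by_cases hj : (j : ℕ) < h + 1
      · have hi : (i : ℕ) < h + 1 := by omega
        rw [extChain_val hk.le g i hi, extChain_val hk.le g j hj]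
        have := hm ⟨i, hi⟩ ⟨j, hj⟩ (by rw [Fin.lt_iff_val_lt_val]; simpa using hij)
        rw [Fin.lt_iff_val_lt_val] at this
        exact this
      · have hi : (i : ℕ) < h + 1 := by have := j.isLt; omega
        rw [extChain_val hk.le g i hi, extChain_val_last g j hj]
        have := Fin.is_le (g ⟨i, hi⟩)
        simp only [Fin.val_last]
        omega
    · apply Fin.ext
      rw [extChain_val hk.le g 0 (by simp)]
      have : (⟨((0 : Fin (h+2)) : ℕ), by simp⟩ : Fin (h+1)) = 0 := Fin.ext (by simp)
      rw [this, h0]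
      simp
    · exact extChain_val_last g _ (by simp)
  · intro f hf
    rw [Finset.mem_filter, mem_chains] at hf
    obtain ⟨⟨hm, h0, hl⟩, hfk⟩ := hf
    have hle : ∀ i : Fin (h+1), (f i.castSucc : ℕ) ≤ k := by
      intro i
      have : f i.castSucc ≤ f (Fin.last h).castSucc :=
        chain_mono hm (by rw [Fin.le_iff_val_le_val]; simpa using Fin.is_le i)
      rw [Fin.le_iff_val_le_val] at this
      omega
    funext i
    apply Fin.ext
    by_cases hi : (i : ℕ) < h + 1
    · rw [extChain_val hk.le _ i hi]
      simp only [resChain, Fin.val_mk]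
      have h3 : ((⟨(i : ℕ), hi⟩ : Fin (h+1)).castSucc) = i := Fin.ext (by simp)
      rw [h3]
      have := hle ⟨(i:ℕ), hi⟩
      rw [h3] at this
      omega
    · rw [extChain_val_last _ i hi]
      have : i = Fin.last (h+1) := Fin.ext (by have := i.isLt; simp; omega)
      rw [this, hl]
  · intro g hg
    rw [mem_chains] at hg
    obtain ⟨hm, h0, hl⟩ := hg
    funext i
    apply Fin.ext
    simp only [resChain, Fin.val_mk]
    rw [extChain_val hk.le g i.castSucc (by simpa using i.isLt)]
    have h3 : (⟨((i.castSucc : Fin (h+2)) : ℕ), by simpa using i.isLt⟩ : Fin (h+1)) = i :=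
      Fin.ext (by simp)
    rw [h3]
    have := Fin.is_le (g i)
    omega
  · intro f hf
    rw [Finset.mem_filter, mem_chains] at hf
    obtain ⟨⟨hm, h0, hl⟩, hfk⟩ := hf
    have hle : ∀ i : Fin (h+1), (f i.castSucc : ℕ) ≤ k := by
      intro i
      have : f i.castSucc ≤ f (Fin.last h).castSucc :=
        chain_mono hm (by rw [Fin.le_iff_val_le_val]; simpa using Fin.is_le i)
      rw [Fin.le_iff_val_le_val] at this
      omega
    rw [Fin.prod_univ_castSucc]
    congr 1
    · refine Finset.prod_congr rfl fun s _ => ?_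
      congr 1
      · simp only [resChain, Fin.val_mk]
        have := hle s.castSucc
        omega
      · simp only [resChain, Fin.val_mk]
        rw [Fin.succ_castSucc]
        have := hle s.succ
        omega
    · have e1 : ((f (Fin.last h).castSucc : Fin (d+1)) : ℕ) = k := hfk
      have e2 : ((f (Fin.last h).succ : Fin (d+1)) : ℕ) = d := by
        rw [Fin.succ_last, hl]; simp
      rw [e1, e2]

lemma one_ne_nil {w : List K} (hw : w ≠ []) : one w = 0 := by
  cases w with
  | nil => exact absurd rfl hw
  | cons a t => rfl

lemma sum_chains_zero {d : ℕ} (F : (Fin 1 → Fin (d+1)) → K) :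
    ∑ f ∈ chains 0 d, F f = if d = 0 then F (fun _ => 0) else 0 := by
  cases d with
  | zero =>
    have : chains 0 0 = {fun _ => 0} := by
      ext f
      rw [mem_chains]
      simp only [Finset.mem_singleton]
      constructor
      · rintro ⟨_, h0, _⟩
        funext i
        have hi : i = 0 := Fin.ext (by omega)
        rw [hi, h0]
      · rintro rfl
        refine ⟨fun i j hij => ?_, rfl, rfl⟩
        exfalso
        have := i.isLt
        have := j.isLt
        rw [Fin.lt_iff_val_lt_val] at hij
        omega
    rw [this]
    simp
  | succ e =>
    have : chains 0 (e+1) = ∅ := by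
      ext f
      rw [mem_chains]
      simp only [Finset.notMem_empty, iff_false]
      rintro ⟨_, h0, hl⟩
      have : (0 : Fin (e+2)) = Fin.last (e+1) := by
        rw [← h0, ← hl]
        exact congrArg f (Fin.ext (by simp))
      simpa [Fin.ext_iff] using this
    rw [this]
    simp

lemma mpow_eq_chains (h : ℕ) (l : List K) :
    mpow (fun w => paj w - one w) h l
      = ∑ f ∈ chains h l.length, ∏ s : Fin h,
          paj ((l.drop (f s.castSucc : ℕ)).take ((f s.succ : ℕ) - (f s.castSucc : ℕ))) := by
  induction h generalizing l with
  | zero =>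
    rw [sum_chains_zero]
    cases l with
    | nil => simp [mpow, one]
    | cons a t => simp [mpow, one]
  | succ h ih =>
    have hkey := key (fun i j => paj ((l.drop i).take (j - i))) h l.length
    rw [show mpow (fun w => paj w - one w) (h+1) l
        = ∑ k ∈ Finset.range (l.length + 1),
            mpow (fun w => paj w - one w) h (l.take k) * (paj (l.drop k) - one (l.drop k))
      from rfl]
    rw [Finset.sum_range_succ]
    rw [List.drop_length]
    have hnil : paj ([] : List K) - one ([] : List K) = 0 := by
      simp [paj, one]
    rw [hnil, mul_zero, add_zero, hkey]
    refine Finset.sum_congr rfl fun k hk => ?_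
    rw [Finset.mem_range] at hk
    have hlen : (l.take k).length = k := by
      rw [List.length_take]; omega
    rw [ih (l.take k), hlen]
    congr 1
    · refine Finset.sum_congr rfl fun g hg => ?_
      refine Finset.prod_congr rfl fun s _ => ?_
      congr 1
      rw [List.drop_take, List.take_take]
      congr 1
      have h1 := Fin.is_le (g s.castSucc)
      have h2 := Fin.is_le (g s.succ)
      omega
    · have hdrop : l.drop k ≠ [] := by
        intro hc
        have := congrArg List.length hc
        simp [List.length_drop] at this
        omega
      rw [one_ne_nil hdrop, sub_zero]
      congr 1
      rw [List.take_of_length_le]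
      rw [List.length_drop]

lemma paj_seg (l : List K) {i j : ℕ} (hij : i ≤ j) (hj : j ≤ l.length) :
    paj ((l.drop i).take (j - i))
      = (∏ m ∈ Finset.Ioc i j, ((l.take m).sum - (l.take i).sum))⁻¹ := by
  have hwlen : ((l.drop i).take (j - i)).length = j - i := by
    rw [List.length_take, List.length_drop]
    omega
  rw [paj, hwlen]
  congr 1
  refine Finset.prod_nbij' (i := fun k => i + k + 1) (j := fun m => m - i - 1)
    ?_ ?_ ?_ ?_ ?_
  · intro k hk
    beta_reduce
    rw [Finset.mem_range] at hk
    rw [Finset.mem_Ioc]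
    omega
  · intro m hm
    beta_reduce
    rw [Finset.mem_Ioc] at hm
    rw [Finset.mem_range]
    omega
  · intro k hk
    rw [Finset.mem_range] at hk
    show i + k + 1 - i - 1 = k
    omega
  · intro m hm
    rw [Finset.mem_Ioc] at hm
    show i + (m - i - 1) + 1 = m
    omega
  · intro k hk
    beta_reduce
    rw [Finset.mem_range] at hk
    rw [List.take_take]
    have hmin : min (k + 1) (j - i) = k + 1 := by omega
    rw [hmin]
    have : l.take (i + k + 1) = l.take i ++ (l.drop i).take (k + 1) := by
      rw [show i + k + 1 = i + (k + 1) by omega, List.take_add]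
    rw [this, List.sum_append]
    ring

/-- after the substitution `x_j ↦ x_1 + ⋯ + x_j` (so `y j` is the `j`-th partial
sum of the list `l = (x_1,…,x_d)`, with `y 0 = 0`), Brown's polar solution satisfies
`ψ_{−1}^#(x_1,…,x_d) = (1/(x_1+⋯+x_d)) · log(paj)(x_1,…,x_d)`. -/
theorem stmt14 {K : Type*} [Field K] [CharZero K] (d : ℕ) (hd : 1 ≤ d)
    (l : List K) (hl : l.length = d) :
    psiNegOne d (fun j => (l.take j).sum)
      = (l.sum)⁻¹ * ∑ h ∈ Finset.Icc 1 d, ((-1 : K) ^ (h + 1) / (h : K)) *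
          mpow (fun w => paj w - one w) h l := by
  rw [psiNegOne]
  have htake : l.take d = l := List.take_of_length_le (by omega)
  congr 1
  · beta_reduce
    rw [htake]
  refine Finset.sum_congr rfl fun h _ => ?_
  congr 1
  rw [mpow_eq_chains h l, hl]
  refine Finset.sum_congr rfl fun f hf => ?_
  rw [mem_chains] at hf
  obtain ⟨hm, h0, hlast⟩ := hf
  refine Finset.prod_congr rfl fun s _ => ?_
  have hab : (f s.castSucc : ℕ) ≤ (f s.succ : ℕ) := by
    have := hm s.castSucc s.succ (Fin.castSucc_lt_succ : s.castSucc < s.succ)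
    rw [Fin.lt_iff_val_lt_val] at this
    omega
  have hbd : (f s.succ : ℕ) ≤ l.length := by
    rw [hl]; exact Fin.is_le _
  rw [paj_seg l hab hbd]
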